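/- For the recursive bisection scheme on a box X = [a,b] ⊂ ℝ^m that always splits along a longest edge, the maximal squared diameter after t levels of subdivision satisfies |T(t)| ≤ ‖b - a‖₂²·(1 - 3/(4m))^t; in particular |T(t)| → 0 as t → ∞. -/
import Mathlib


open Finset
open scoped Classical

/-- The smallest index of a longest edge of the box `[B.1, B.2]`. -/
noncomputable def splitIndex {m : ℕ} [NeZero m] (B : (Fin m → ℝ) × (Fin m → ℝ)) : Fin m :=
  (Finset.univ.filter fun i => ∀ j, B.2 j - B.1 j ≤ B.2 i - B.1 i).min'
    (by
      obtain ⟨i, -, hi⟩ := Finset.exists_max_image (Finset.univ : Finset (Fin m))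
        (fun i => B.2 i - B.1 i) Finset.univ_nonempty
      exact ⟨i, Finset.mem_filter.mpr
        ⟨Finset.mem_univ _, fun j => hi j (Finset.mem_univ _)⟩⟩)

/-- The first half of the midpoint bisection along the longest edge. -/
noncomputable def child1 {m : ℕ} [NeZero m] (B : (Fin m → ℝ) × (Fin m → ℝ)) :
    (Fin m → ℝ) × (Fin m → ℝ) :=
  (B.1, Function.update B.2 (splitIndex B) ((B.1 (splitIndex B) + B.2 (splitIndex B)) / 2))

/-- The second half of the midpoint bisection along the longest edge. -/
noncomputable def child2 {m : ℕ} [NeZero m] (B : (Fin m → ℝ) × (Fin m → ℝ)) :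
    (Fin m → ℝ) × (Fin m → ℝ) :=
  (Function.update B.1 (splitIndex B) ((B.1 (splitIndex B) + B.2 (splitIndex B)) / 2), B.2)

/-- The interval-division operator: `ID B t` is the collection of sub-boxes obtained after
`t` levels of longest-edge midpoint bisection. -/
noncomputable def ID {m : ℕ} [NeZero m] :
    ((Fin m → ℝ) × (Fin m → ℝ)) → ℕ → Set ((Fin m → ℝ) × (Fin m → ℝ))
  | B, 0 => {B}
  | B, t + 1 => ID (child1 B) t ∪ ID (child2 B) t

section Aux
variable {m : ℕ} [NeZero m]

lemma splitIndex_le (B : (Fin m → ℝ) × (Fin m → ℝ)) (j : Fin m) :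
    B.2 j - B.1 j ≤ B.2 (splitIndex B) - B.1 (splitIndex B) := by
  have hne : (Finset.univ.filter fun i => ∀ j, B.2 j - B.1 j ≤ B.2 i - B.1 i).Nonempty := by
    obtain ⟨i, -, hi⟩ := Finset.exists_max_image (Finset.univ : Finset (Fin m))
      (fun i => B.2 i - B.1 i) Finset.univ_nonempty
    exact ⟨i, Finset.mem_filter.mpr ⟨Finset.mem_univ _, fun j => hi j (Finset.mem_univ _)⟩⟩
  have h : splitIndex B ∈ Finset.univ.filter
      fun i => ∀ j, B.2 j - B.1 j ≤ B.2 i - B.1 i := Finset.min'_mem _ hne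
  exact (Finset.mem_filter.mp h).2 j

lemma child1_mono (B : (Fin m → ℝ) × (Fin m → ℝ)) (hB : ∀ i, B.1 i ≤ B.2 i) :
    ∀ i, (child1 B).1 i ≤ (child1 B).2 i := by
  intro i
  by_cases h : i = splitIndex B
  · subst h
    simp only [child1, Function.update_self]
    linarith [hB (splitIndex B)]
  · simp only [child1, Function.update_of_ne h]
    exact hB i

lemma child2_mono (B : (Fin m → ℝ) × (Fin m → ℝ)) (hB : ∀ i, B.1 i ≤ B.2 i) :
    ∀ i, (child2 B).1 i ≤ (child2 B).2 i := by
  intro i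
  by_cases h : i = splitIndex B
  · subst h
    simp only [child2, Function.update_self]
    linarith [hB (splitIndex B)]
  · simp only [child2, Function.update_of_ne h]
    exact hB i

lemma sum_sq_child (B : (Fin m → ℝ) × (Fin m → ℝ)) (hB : ∀ i, B.1 i ≤ B.2 i)
    (C : (Fin m → ℝ) × (Fin m → ℝ)) (hC : C = child1 B ∨ C = child2 B) :
    ∑ i, (C.2 i - C.1 i) ^ 2 ≤
      (∑ i, (B.2 i - B.1 i) ^ 2) * (1 - 3 / (4 * (m : ℝ))) := by
  set s := splitIndex B with hs
  set D := ∑ i, (B.2 i - B.1 i) ^ 2 with hD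
  have hm : (0 : ℝ) < m := by
    exact_mod_cast Nat.pos_of_ne_zero (NeZero.ne m)
  -- the edge function of both children
  have hedge : ∀ i, C.2 i - C.1 i =
      if i = s then (B.2 s - B.1 s) / 2 else B.2 i - B.1 i := by
    intro i
    by_cases h : i = s
    · subst h
      rw [if_pos rfl]
      rcases hC with rfl | rfl <;>
        simp only [child1, child2, hs, Function.update_self] <;> ring
    · rw [if_neg h]
      rw [hs] at h
      rcases hC with rfl | rfl <;>
        simp only [child1, child2, Function.update_of_ne h]
  have hsum : ∑ i, (C.2 i - C.1 i) ^ 2 = D - (3/4) * (B.2 s - B.1 s) ^ 2 := by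
    have h1 : ∑ i, (C.2 i - C.1 i) ^ 2
        = ∑ i ∈ Finset.univ.erase s, (C.2 i - C.1 i) ^ 2 + (C.2 s - C.1 s) ^ 2 :=
      (Finset.sum_erase_add _ _ (Finset.mem_univ s)).symm
    have h2 : D = ∑ i ∈ Finset.univ.erase s, (B.2 i - B.1 i) ^ 2 + (B.2 s - B.1 s) ^ 2 :=
      (Finset.sum_erase_add _ _ (Finset.mem_univ s)).symm
    have h3 : ∑ i ∈ Finset.univ.erase s, (C.2 i - C.1 i) ^ 2
        = ∑ i ∈ Finset.univ.erase s, (B.2 i - B.1 i) ^ 2 := by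
      refine Finset.sum_congr rfl fun i hi => ?_
      rw [hedge i, if_neg (Finset.ne_of_mem_erase hi)]
    have h4 : C.2 s - C.1 s = (B.2 s - B.1 s) / 2 := by rw [hedge s, if_pos rfl]
    rw [h1, h3, h4, h2]; ring
  have hds : 0 ≤ B.2 s - B.1 s := by linarith [hB s]
  have hDm : D ≤ (m : ℝ) * (B.2 s - B.1 s) ^ 2 := by
    calc D ≤ ∑ _i : Fin m, (B.2 s - B.1 s) ^ 2 := by
          refine Finset.sum_le_sum fun i _ => ?_
          have h1 := splitIndex_le B i
          have h2 := hB i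
          nlinarith
      _ = (m : ℝ) * (B.2 s - B.1 s) ^ 2 := by
          rw [Finset.sum_const, Finset.card_univ, Fintype.card_fin, nsmul_eq_mul]
  have hdiv : D / (m : ℝ) ≤ (B.2 s - B.1 s) ^ 2 := by
    rw [div_le_iff₀ hm]; linarith
  have hE : D * (1 - 3 / (4 * (m : ℝ))) - (D - (3/4) * (B.2 s - B.1 s) ^ 2)
      = (3/4) * ((B.2 s - B.1 s) ^ 2 - D / (m : ℝ)) := by
    field_simp
    ring
  rw [hsum]
  linarith

lemma ID_mem {m : ℕ} [NeZero m] :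
    ∀ (t : ℕ) (B : (Fin m → ℝ) × (Fin m → ℝ)), (∀ i, B.1 i ≤ B.2 i) →
      ∀ C ∈ ID B t, (∀ i, C.1 i ≤ C.2 i) ∧
        ∑ i, (C.2 i - C.1 i) ^ 2 ≤
          (∑ i, (B.2 i - B.1 i) ^ 2) * (1 - 3 / (4 * (m : ℝ))) ^ t := by
  intro t
  induction t with
  | zero =>
    intro B hB C hC
    have : C = B := hC
    subst this
    refine ⟨hB, ?_⟩
    simp
  | succ t ih =>
    intro B hB C hC
    have hm : (0 : ℝ) < m := by exact_mod_cast Nat.pos_of_ne_zero (NeZero.ne m)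
    have hm1 : (1 : ℝ) ≤ m := by exact_mod_cast Nat.one_le_iff_ne_zero.mpr (NeZero.ne m)
    have hq0 : (0 : ℝ) ≤ 1 - 3 / (4 * (m : ℝ)) := by
      have : 3 / (4 * (m : ℝ)) ≤ 3 / 4 := by
        apply div_le_div_of_nonneg_left (by norm_num) (by norm_num) (by linarith)
      linarith
    rcases hC with hC | hC
    · obtain ⟨h1, h2⟩ := ih (child1 B) (child1_mono B hB) C hC
      refine ⟨h1, ?_⟩
      calc ∑ i, (C.2 i - C.1 i) ^ 2
          ≤ (∑ i, ((child1 B).2 i - (child1 B).1 i) ^ 2) * (1 - 3 / (4 * (m : ℝ))) ^ t := h2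
        _ ≤ ((∑ i, (B.2 i - B.1 i) ^ 2) * (1 - 3 / (4 * (m : ℝ)))) * (1 - 3 / (4 * (m : ℝ))) ^ t :=
            mul_le_mul_of_nonneg_right (sum_sq_child B hB _ (Or.inl rfl)) (pow_nonneg hq0 t)
        _ = (∑ i, (B.2 i - B.1 i) ^ 2) * (1 - 3 / (4 * (m : ℝ))) ^ (t + 1) := by ring
    · obtain ⟨h1, h2⟩ := ih (child2 B) (child2_mono B hB) C hC
      refine ⟨h1, ?_⟩
      calc ∑ i, (C.2 i - C.1 i) ^ 2
          ≤ (∑ i, ((child2 B).2 i - (child2 B).1 i) ^ 2) * (1 - 3 / (4 * (m : ℝ))) ^ t := h2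
        _ ≤ ((∑ i, (B.2 i - B.1 i) ^ 2) * (1 - 3 / (4 * (m : ℝ)))) * (1 - 3 / (4 * (m : ℝ))) ^ t :=
            mul_le_mul_of_nonneg_right (sum_sq_child B hB _ (Or.inr rfl)) (pow_nonneg hq0 t)
        _ = (∑ i, (B.2 i - B.1 i) ^ 2) * (1 - 3 / (4 * (m : ℝ))) ^ (t + 1) := by ring

lemma ID_nonempty {m : ℕ} [NeZero m] :
    ∀ (t : ℕ) (B : (Fin m → ℝ) × (Fin m → ℝ)), (ID B t).Nonempty := by
  intro t
  induction t with
  | zero => intro B; exact ⟨B, rfl⟩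
  | succ t ih => intro B; exact (ih (child1 B)).mono Set.subset_union_left

end Aux

/-- After `t` levels of longest-edge bisection, every sub-box has squared diameter at most
`‖b-a‖₂² (1 - 3/(4m))^t`; in particular the maximal squared diameter tends to `0`. -/
theorem stmt9 {m : ℕ} [NeZero m] (a b : Fin m → ℝ) (hab : ∀ i, a i < b i) :
    (∀ t : ℕ, ∀ B ∈ ID (a, b) t,
        ∑ i, (B.2 i - B.1 i) ^ 2 ≤ (∑ i, (b i - a i) ^ 2) * (1 - 3 / (4 * (m : ℝ))) ^ t) ∧
      Filter.Tendsto
        (fun t : ℕ => sSup ((fun B : (Fin m → ℝ) × (Fin m → ℝ) =>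
          ∑ i, (B.2 i - B.1 i) ^ 2) '' ID (a, b) t)) Filter.atTop (nhds 0) := by
  have hab' : ∀ i, a i ≤ b i := fun i => (hab i).le
  have hpart1 : ∀ t : ℕ, ∀ B ∈ ID (a, b) t,
      ∑ i, (B.2 i - B.1 i) ^ 2 ≤ (∑ i, (b i - a i) ^ 2) * (1 - 3 / (4 * (m : ℝ))) ^ t := by
    intro t B hB
    exact (ID_mem t (a, b) hab' B hB).2
  refine ⟨hpart1, ?_⟩
  have hm : (0 : ℝ) < m := by exact_mod_cast Nat.pos_of_ne_zero (NeZero.ne m)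
  have hm1 : (1 : ℝ) ≤ m := by exact_mod_cast Nat.one_le_iff_ne_zero.mpr (NeZero.ne m)
  have hq0 : (0 : ℝ) ≤ 1 - 3 / (4 * (m : ℝ)) := by
    have : 3 / (4 * (m : ℝ)) ≤ 3 / 4 := by
      apply div_le_div_of_nonneg_left (by norm_num) (by norm_num) (by linarith)
    linarith
  have hq1 : (1 - 3 / (4 * (m : ℝ))) < 1 := by
    have : 0 < 3 / (4 * (m : ℝ)) := by positivity
    linarith
  set D0 := ∑ i, (b i - a i) ^ 2 with hD0
  have hbdd : ∀ t, BddAbove ((fun B : (Fin m → ℝ) × (Fin m → ℝ) =>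
      ∑ i, (B.2 i - B.1 i) ^ 2) '' ID (a, b) t) := by
    intro t
    refine ⟨D0 * (1 - 3 / (4 * (m : ℝ))) ^ t, ?_⟩
    rintro x ⟨B, hB, rfl⟩
    exact hpart1 t B hB
  have hle : ∀ t, sSup ((fun B : (Fin m → ℝ) × (Fin m → ℝ) =>
      ∑ i, (B.2 i - B.1 i) ^ 2) '' ID (a, b) t) ≤ D0 * (1 - 3 / (4 * (m : ℝ))) ^ t := by
    intro t
    apply csSup_le ((ID_nonempty t (a, b)).image _)
    rintro x ⟨B, hB, rfl⟩
    exact hpart1 t B hB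
  have hge : ∀ t, 0 ≤ sSup ((fun B : (Fin m → ℝ) × (Fin m → ℝ) =>
      ∑ i, (B.2 i - B.1 i) ^ 2) '' ID (a, b) t) := by
    intro t
    obtain ⟨B, hB⟩ := ID_nonempty t ((a, b) : (Fin m → ℝ) × (Fin m → ℝ))
    have hmem : ∑ i, (B.2 i - B.1 i) ^ 2 ∈
        (fun B : (Fin m → ℝ) × (Fin m → ℝ) => ∑ i, (B.2 i - B.1 i) ^ 2) '' ID (a, b) t :=
      ⟨B, hB, rfl⟩
    exact le_trans (Finset.sum_nonneg fun i _ => sq_nonneg _) (le_csSup (hbdd t) hmem)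
  have hlim : Filter.Tendsto (fun t : ℕ => D0 * (1 - 3 / (4 * (m : ℝ))) ^ t)
      Filter.atTop (nhds 0) := by
    have := (tendsto_pow_atTop_nhds_zero_of_lt_one hq0 hq1).const_mul D0
    simpa using this
  exact squeeze_zero hge hle hlim
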